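/- Let R be an excellent ring and let I and J be radical ideals of R such that the quotient ring R/(I ∩ J) is seminormal. Then the ideal I + J is radical. -/

import Mathlib

open IsLocalRing TensorProduct

universe u

section Defs

variable (R : Type u) [CommRing R]

/-- The embedding dimension of a Noetherian local ring: `dim_k (m/m²)`. -/
noncomputable def embDim [IsLocalRing R] : ℕ :=
  Module.finrank (ResidueField R) (CotangentSpace R)

/-- A Noetherian local ring is regular if its embedding dimension equals its Krull dimension. -/
def IsRegularLocal [IsLocalRing R] : Prop :=
  IsNoetherianRing R ∧ (embDim R : WithBot ℕ∞) = ringKrullDim R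

/-- A (not necessarily local) commutative ring is regular if it is Noetherian and all of its
localizations at primes are regular local rings. -/
def IsRegularRing' : Prop :=
  IsNoetherianRing R ∧ ∀ (p : Ideal R) (_ : p.IsPrime), IsRegularLocal (Localization.AtPrime p)

/-- An algebra `A` over a field `k` is geometrically regular if `L ⊗ₖ A` is a regular ring for
every finite field extension `L` of `k`. -/
def IsGeomRegularAlgebra (k : Type u) (A : Type u) [Field k] [CommRing A] [Algebra k A] : Prop :=
  ∀ (L : Type u) [Field L] [Algebra k L], Module.Finite k L → IsRegularRing' (L ⊗[k] A)

/-- A chain of primes is saturated if each step is a covering relation. -/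
def IsSaturatedChain {α : Type u} [Preorder α] (c : LTSeries α) : Prop :=
  ∀ i : Fin c.length, c.toFun i.castSucc ⋖ c.toFun i.succ

/-- A ring is catenary if any two saturated chains of primes with the same endpoints have the
same length. -/
def IsCatenary : Prop :=
  ∀ c₁ c₂ : LTSeries (PrimeSpectrum R), c₁.head = c₂.head → c₁.last = c₂.last →
    IsSaturatedChain c₁ → IsSaturatedChain c₂ → c₁.length = c₂.length

/-- A ring is universally catenary if every finite type algebra over it is catenary. -/
def IsUniversallyCatenary : Prop :=
  ∀ (S : Type u) [CommRing S] [Algebra R S], Algebra.FiniteType R S → IsCatenary S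

/-- The residue field of a ring at a prime ideal. -/
abbrev residueFieldAt (q : Ideal R) [q.IsPrime] : Type u :=
  ResidueField (Localization.AtPrime q)

/-- A ring is a G-ring if, for every prime `p`, the formal fibers of `R_p` (the fibers of the
map from `R_p` to its `maximal-adic` completion, over the primes `q ⊆ p` of `R`) are
geometrically regular over the residue fields `κ(q)`. -/
def IsGRing : Prop :=
  ∀ (p : Ideal R) (_ : p.IsPrime) (q : Ideal R) (_ : q.IsPrime), q ≤ p →
    letI Rp := Localization.AtPrime p
    letI Rphat := AdicCompletion (maximalIdeal Rp) Rp
    letI algRphat : Algebra R Rphat :=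
      ((algebraMap Rp Rphat).comp (algebraMap R Rp)).toAlgebra
    letI algK : Algebra R (residueFieldAt R q) :=
      ((algebraMap (Localization.AtPrime q) (residueFieldAt R q)).comp
        (algebraMap R (Localization.AtPrime q))).toAlgebra
    IsGeomRegularAlgebra (residueFieldAt R q)
      (@TensorProduct R _ (residueFieldAt R q) Rphat _ _ algK.toModule algRphat.toModule)

/-- A ring is J-2 if the regular locus of every finite type algebra over it is open. -/
def IsJ2 : Prop :=
  ∀ (S : Type u) [CommRing S] [Algebra R S], Algebra.FiniteType R S →
    IsOpen {p : PrimeSpectrum S | IsRegularLocal (Localization.AtPrime p.asIdeal)}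

/-- A ring is excellent if it is Noetherian, universally catenary, a G-ring, and J-2. -/
def IsExcellentRing : Prop :=
  IsNoetherianRing R ∧ IsUniversallyCatenary R ∧ IsGRing R ∧ IsJ2 R

/-- A proper ideal of a local ring is equidimensional if all of its minimal primes have the same
coheight. -/
def IsEquidimensionalIdeal (Q : Ideal R) : Prop :=
  ∀ P ∈ Q.minimalPrimes, ringKrullDim (R ⧸ P) = ringKrullDim (R ⧸ Q)

/-- A set of ideals of a local ring is a pseudo-prime system if each of its members is a proper
radical equidimensional ideal, and whenever some minimal prime of one member is contained in a
minimal prime of another, the first member is contained in the second. -/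
def IsPseudoPrimeSystem (𝒬 : Set (Ideal R)) : Prop :=
  (∀ Q ∈ 𝒬, Q ≠ ⊤ ∧ Q.IsRadical ∧ IsEquidimensionalIdeal R Q) ∧
    ∀ Q₁ ∈ 𝒬, ∀ Q₂ ∈ 𝒬,
      (∃ P₁ ∈ Q₁.minimalPrimes, ∃ P₂ ∈ Q₂.minimalPrimes, P₁ ≤ P₂) → Q₁ ≤ Q₂

/-- `e(R, 𝒬, d)`: the number of ideals in `𝒬` of coheight `d`. -/
noncomputable def sysCount (𝒬 : Set (Ideal R)) (d : ℕ) : ℕ :=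
  {Q ∈ 𝒬 | ringKrullDim (R ⧸ Q) = (d : WithBot ℕ∞)}.ncard

/-- The set of all intersections of finite nonempty subcollections of `𝒬`. -/
def finiteIntersections (𝒬 : Set (Ideal R)) : Set (Ideal R) :=
  {I | ∃ α : Finset (Ideal R), α.Nonempty ∧ ↑α ⊆ 𝒬 ∧ I = α.inf id}

/-- A pseudo-prime system `𝒬` is intersection compatible if the set of intersections of finite
nonempty subcollections of `𝒬` is closed under (finite) sums. -/
def IsIntersectionCompatible (𝒬 : Set (Ideal R)) : Prop :=
  ∀ I ∈ finiteIntersections R 𝒬, ∀ J ∈ finiteIntersections R 𝒬,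
    I + J ∈ finiteIntersections R 𝒬

end Defs

section Seminormality

open IsLocalRing in
/-- A ring map `f : A → B` is a subintegral extension if it is injective, `B` is reduced and
module-finite over `A`, `f` induces a bijection on prime spectra, and `f` induces isomorphisms
of residue fields at all primes. -/
def IsSubintegralExtension {A B : Type u} [CommRing A] [CommRing B] (f : A →+* B) : Prop :=
  Function.Injective f ∧ IsReduced B ∧
    (letI := f.toAlgebra; Module.Finite A B) ∧
    Function.Bijective (PrimeSpectrum.comap f) ∧
    ∀ (q : Ideal B) [q.IsPrime],
      haveI := Localization.isLocalHom_localRingHom (q.comap f) q f rfl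
      Function.Bijective (ResidueField.map (Localization.localRingHom (q.comap f) q f rfl))

/-- A reduced ring `A` is seminormal if every subintegral extension out of `A` is an
isomorphism. -/
def IsSeminormalRing (A : Type u) [CommRing A] : Prop :=
  IsReduced A ∧ ∀ (B : Type u) [CommRing B] (f : A →+* B),
    IsSubintegralExtension f → Function.Bijective f

end Seminormality

theorem subintegral_aux {A B : Type u} [CommRing A] [CommRing B] (f : A →+* B)
    (finj : Function.Injective f) (hred : IsReduced B)
    (b' : B) (a2 a3 : A) (hb2 : b' ^ 2 = f a2) (hb3 : b' ^ 3 = f a3)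
    (hrep : ∀ s : B, ∃ u v : A, s = f u + f v * b') :
    IsSubintegralExtension f := by
  classical
  letI := f.toAlgebra
  have halg : ∀ a : A, algebraMap A B a = f a := fun a => rfl
  have hfin : Module.Finite A B := by
    refine ⟨⟨({1, b'} : Finset B), eq_top_iff.mpr ?_⟩⟩
    rintro s -
    obtain ⟨u, v, hs⟩ := hrep s
    have : ({(1 : B), b'} : Finset B) = ({1, b'} : Set B) := by simp
    rw [this]
    refine Submodule.mem_span_pair.mpr ⟨u, v, ?_⟩
    show f u * 1 + f v * b' = s
    rw [mul_one]
    exact hs.symm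
  haveI := hfin
  haveI : Algebra.IsIntegral A B := Algebra.IsIntegral.of_finite A B
  have hspecsurj : Function.Surjective (PrimeSpectrum.comap f) := by
    intro p
    obtain ⟨Q, -, hQ, hQc⟩ := Ideal.exists_ideal_over_prime_of_isIntegral
      (S := B) p.asIdeal ⊥ (by
        rw [← RingHom.ker_eq_comap_bot,
          (RingHom.injective_iff_ker_eq_bot (algebraMap A B)).mp finj]
        exact bot_le)
    exact ⟨⟨Q, hQ⟩, PrimeSpectrum.ext hQc⟩
  have hmono : ∀ q₁ q₂ : Ideal B, q₁.IsPrime → q₂.IsPrime →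
      q₁.comap f = q₂.comap f → q₁ ≤ q₂ := by
    intro q₁ q₂ hq₁ hq₂ hcomap s hs
    have hmem : ∀ a : A, f a ∈ q₁ ↔ f a ∈ q₂ := by
      intro a
      constructor
      · intro h
        have h' : a ∈ q₁.comap f := h
        rw [hcomap] at h'
        exact h'
      · intro h
        have h' : a ∈ q₂.comap f := h
        rw [← hcomap] at h'
        exact h'
    obtain ⟨u, v, rfl⟩ := hrep s
    by_cases hbq : b' ∈ q₂
    · have hb1 : b' ∈ q₁ := by
        have h2 : b' ^ 2 ∈ q₂ := q₂.pow_mem_of_mem hbq 2 (by norm_num)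
        rw [hb2] at h2
        have h2' := (hmem a2).mpr h2
        rw [← hb2] at h2'
        exact hq₁.mem_of_pow_mem 2 h2'
      have hfu : f u ∈ q₁ := by
        have heq : f u = (f u + f v * b') - f v * b' := by ring
        rw [heq]
        exact q₁.sub_mem hs (q₁.mul_mem_left _ hb1)
      exact q₂.add_mem ((hmem u).mp hfu) (q₂.mul_mem_left _ hbq)
    · have hmul : (f u + f v * b') * b' ^ 2 = f (u * a2 + v * a3) := by
        rw [map_add, map_mul, map_mul, ← hb2, ← hb3]
        ring
      have h1 : f (u * a2 + v * a3) ∈ q₁ := by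
        rw [← hmul]
        exact q₁.mul_mem_right _ hs
      have h2 := (hmem _).mp h1
      rw [← hmul] at h2
      rcases hq₂.mem_or_mem h2 with h | h
      · exact h
      · exact absurd (hq₂.mem_of_pow_mem 2 h) hbq
  have hspecinj : Function.Injective (PrimeSpectrum.comap f) := by
    intro q₁ q₂ h
    have h' : q₁.asIdeal.comap f = q₂.asIdeal.comap f := congrArg PrimeSpectrum.asIdeal h
    exact PrimeSpectrum.ext
      (le_antisymm (hmono _ _ q₁.isPrime q₂.isPrime h') (hmono _ _ q₂.isPrime q₁.isPrime h'.symm))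
  refine ⟨finj, hred, hfin, ⟨hspecinj, hspecsurj⟩, ?_⟩
  intro q hq
  haveI := hq
  haveI := Localization.isLocalHom_localRingHom (q.comap f) q f rfl
  set L := Localization.AtPrime q with hL
  set h := Localization.localRingHom (q.comap f) q f rfl with hh
  refine ⟨(ResidueField.map h).injective, ?_⟩
  let ψ : B →+* ResidueField L := (IsLocalRing.residue L).comp (algebraMap B L)
  let F : Subfield (ResidueField L) := (ResidueField.map h).fieldRange
  have hψf : ∀ a : A, ψ (f a) ∈ F := by
    intro a
    refine ⟨IsLocalRing.residue _ (algebraMap A (Localization.AtPrime (q.comap f)) a), ?_⟩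
    rw [ResidueField.map_residue, Localization.localRingHom_to_map]
    rfl
  have hψb : ψ b' ∈ F := by
    by_cases h2 : ψ (f a2) = 0
    · have hz : ψ b' ^ 2 = 0 := by rw [← map_pow, hb2]; exact h2
      have : ψ b' = 0 := pow_eq_zero_iff (n := 2) (by norm_num) |>.mp hz
      rw [this]; exact zero_mem F
    · have hmul : ψ b' * ψ (f a2) = ψ (f a3) := by
        rw [← map_mul]
        congr 1
        rw [← hb2, ← hb3]
        ring
      have : ψ b' = ψ (f a3) / ψ (f a2) := by rw [eq_div_iff h2]; exact hmul
      rw [this]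
      exact F.div_mem (hψf a3) (hψf a2)
  have hψS : ∀ s : B, ψ s ∈ F := by
    intro s
    obtain ⟨u, v, rfl⟩ := hrep s
    rw [map_add, map_mul]
    exact F.add_mem (hψf u) (F.mul_mem (hψf v) hψb)
  intro z
  obtain ⟨ℓ, rfl⟩ := IsLocalRing.residue_surjective (R := L) z
  obtain ⟨⟨s, t⟩, rfl⟩ := IsLocalization.mk'_surjective q.primeCompl ℓ
  have htq : ψ t ≠ 0 := by
    intro h0
    have hmem : algebraMap B L t ∈ maximalIdeal L := Ideal.Quotient.eq_zero_iff_mem.mp h0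
    have h2 : (t : B) ∈ (maximalIdeal L).comap (algebraMap B L) := hmem
    rw [← Ideal.under_def, Localization.AtPrime.comap_maximalIdeal] at h2
    exact t.2 h2
  have hspec : IsLocalRing.residue L (IsLocalization.mk' L s t) * ψ t = ψ s := by
    show _ * IsLocalRing.residue L (algebraMap B L t) = IsLocalRing.residue L (algebraMap B L s)
    rw [← map_mul, IsLocalization.mk'_spec]
  have heq : IsLocalRing.residue L (IsLocalization.mk' L s t) = ψ s / ψ t := by
    rw [eq_div_iff htq]; exact hspec
  rw [heq]
  exact F.div_mem (hψS s) (hψS t)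

set_option synthInstance.maxHeartbeats 1000000 in
set_option maxHeartbeats 1000000 in
theorem key_step {R : Type u} [CommRing R] (I J : Ideal R) (hI : I.IsRadical) (hJ : J.IsRadical)
    (hsn : IsSeminormalRing (R ⧸ (I ⊓ J))) {x : R}
    (h2 : x ^ 2 ∈ I + J) (h3 : x ^ 3 ∈ I + J) : x ∈ I + J := by
  classical
  rw [Ideal.add_eq_sup, Submodule.mem_sup] at h2 h3
  obtain ⟨i2, hi2, j2, hj2, hx2⟩ := h2
  obtain ⟨i3, hi3, j3, hj3, hx3⟩ := h3
  let A : Type u := R ⧸ (I ⊓ J)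
  let C : Type u := (R ⧸ I) × (R ⧸ J)
  let π : R →+* C := (Ideal.Quotient.mk I).prod (Ideal.Quotient.mk J)
  have hker : ∀ r ∈ I ⊓ J, π r = 0 := by
    intro r hr
    have h1 : Ideal.Quotient.mk I r = 0 := Ideal.Quotient.eq_zero_iff_mem.mpr hr.1
    have h2 : Ideal.Quotient.mk J r = 0 := Ideal.Quotient.eq_zero_iff_mem.mpr hr.2
    exact Prod.ext h1 h2
  let g : A →+* C := Ideal.Quotient.lift (I ⊓ J) π hker
  have hg : ∀ r : R, g (Ideal.Quotient.mk (I ⊓ J) r)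
      = (Ideal.Quotient.mk I r, Ideal.Quotient.mk J r) := fun r => rfl
  have ginj : Function.Injective g := by
    intro a b hab
    obtain ⟨r, rfl⟩ := Ideal.Quotient.mk_surjective a
    obtain ⟨s, rfl⟩ := Ideal.Quotient.mk_surjective b
    rw [hg, hg, Prod.ext_iff] at hab
    exact Ideal.Quotient.eq.mpr
      (Ideal.mem_inf.mpr ⟨Ideal.Quotient.eq.mp hab.1, Ideal.Quotient.eq.mp hab.2⟩)
  letI : Algebra A C := g.toAlgebra
  have halgC : ∀ a : A, algebraMap A C a = g a := fun a => rfl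
  let b : C := (Ideal.Quotient.mk I x, 0)
  let a2 : A := Ideal.Quotient.mk (I ⊓ J) j2
  let a3 : A := Ideal.Quotient.mk (I ⊓ J) j3
  have hb2 : b ^ 2 = g a2 := by
    rw [hg, Prod.ext_iff]
    constructor
    · show (Ideal.Quotient.mk I x) ^ 2 = Ideal.Quotient.mk I j2
      rw [← map_pow]
      exact Ideal.Quotient.eq.mpr (by rw [show x ^ 2 - j2 = i2 by rw [← hx2]; ring]; exact hi2)
    · show (0 : R ⧸ J) ^ 2 = Ideal.Quotient.mk J j2
      rw [(Ideal.Quotient.eq_zero_iff_mem).mpr hj2]; ring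
  have hb3 : b ^ 3 = g a3 := by
    rw [hg, Prod.ext_iff]
    constructor
    · show (Ideal.Quotient.mk I x) ^ 3 = Ideal.Quotient.mk I j3
      rw [← map_pow]
      exact Ideal.Quotient.eq.mpr (by rw [show x ^ 3 - j3 = i3 by rw [← hx3]; ring]; exact hi3)
    · show (0 : R ⧸ J) ^ 3 = Ideal.Quotient.mk J j3
      rw [(Ideal.Quotient.eq_zero_iff_mem).mpr hj3]; ring
  -- the subintegral extension
  let S : Subalgebra A C := Algebra.adjoin A {b}
  let f : A →+* ↥S := algebraMap A ↥S
  let b' : ↥S := ⟨b, Algebra.self_mem_adjoin_singleton A b⟩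
  have hfv : ∀ a : A, (f a : C) = g a := fun a => rfl
  have finj : Function.Injective f := fun u v h => ginj (by rw [← hfv, ← hfv, h])
  have hb'2 : b' ^ 2 = f a2 := Subtype.ext (by rw [SubmonoidClass.coe_pow]; exact hb2)
  have hb'3 : b' ^ 3 = f a3 := Subtype.ext (by rw [SubmonoidClass.coe_pow]; exact hb3)
  have hrepC : ∀ c ∈ S, ∃ u v : A, c = g u + g v * b := by
    intro c hc
    induction hc using Algebra.adjoin_induction with
    | mem y hy =>
      rw [Set.mem_singleton_iff] at hy
      subst hy
      exact ⟨0, 1, by simp⟩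
    | algebraMap r => exact ⟨r, 0, by simp [halgC]⟩
    | add u v hu hv ihu ihv =>
      obtain ⟨u1, v1, rfl⟩ := ihu
      obtain ⟨u2, v2, rfl⟩ := ihv
      exact ⟨u1 + u2, v1 + v2, by rw [map_add, map_add]; ring⟩
    | mul u v hu hv ihu ihv =>
      obtain ⟨u1, v1, rfl⟩ := ihu
      obtain ⟨u2, v2, rfl⟩ := ihv
      refine ⟨u1 * u2 + v1 * v2 * a2, u1 * v2 + v1 * u2, ?_⟩
      rw [map_add, map_add, map_mul, map_mul, map_mul, map_mul, map_mul, ← hb2]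
      ring
  have hrep : ∀ s : ↥S, ∃ u v : A, s = f u + f v * b' := by
    intro s
    obtain ⟨u, v, huv⟩ := hrepC s s.2
    refine ⟨u, v, Subtype.ext ?_⟩
    push_cast
    rw [hfv, hfv]
    exact huv
  haveI : IsReduced (R ⧸ I) := (Ideal.isRadical_iff_quotient_reduced I).mp hI
  haveI : IsReduced (R ⧸ J) := (Ideal.isRadical_iff_quotient_reduced J).mp hJ
  haveI : IsReduced C := inferInstance
  have hred : IsReduced ↥S := isReduced_of_injective S.val Subtype.val_injective
  have hsub : IsSubintegralExtension f :=
    subintegral_aux f finj hred b' a2 a3 hb'2 hb'3 hrep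
  obtain ⟨a, ha⟩ := (hsn.2 ↥S f hsub).2 b'
  obtain ⟨r, rfl⟩ := Ideal.Quotient.mk_surjective a
  have hC : g (Ideal.Quotient.mk (I ⊓ J) r) = b := by
    rw [← hfv]
    exact congrArg Subtype.val ha
  rw [hg, Prod.ext_iff] at hC
  have hrx : r - x ∈ I := Ideal.Quotient.eq.mp hC.1
  have hrJ : r ∈ J := Ideal.Quotient.eq_zero_iff_mem.mp hC.2
  rw [Ideal.add_eq_sup]
  exact Submodule.mem_sup.mpr ⟨x - r, by simpa using I.neg_mem hrx, r, hrJ, by ring⟩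

/-- If `I` and `J` are radical ideals of an excellent ring `R` such that `R ⧸ (I ⊓ J)` is
seminormal, then `I + J` is a radical ideal. -/
theorem isRadical_add_of_isSeminormalRing_quotient_inf (R : Type u) [CommRing R]
    (hexc : IsExcellentRing R) (I J : Ideal R) (hI : I.IsRadical) (hJ : J.IsRadical)
    (hsn : IsSeminormalRing (R ⧸ (I ⊓ J))) : (I + J).IsRadical := by
  intro x hx
  obtain ⟨n, hn⟩ := hx
  have main : ∀ n : ℕ, x ^ n ∈ I + J → x ∈ I + J := by
    intro n
    induction n with
    | zero =>
      intro h
      have h1 : (1 : R) ∈ I + J := by simpa using h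
      have := (Ideal.eq_top_iff_one (I + J)).mpr h1
      rw [this]
      trivial
    | succ k ih =>
      intro h
      match k, ih, h with
      | 0, _, h => simpa using h
      | (m + 1), ih, h =>
        apply ih
        apply key_step I J hI hJ hsn
        · have e : (x ^ (m + 1)) ^ 2 = x ^ (m + 2) * x ^ m := by
            rw [← pow_mul, ← pow_add]
            congr 1
            ring
          rw [e]
          exact Ideal.mul_mem_right _ _ h
        · have e : (x ^ (m + 1)) ^ 3 = x ^ (m + 2) * x ^ (2 * m + 1) := by
            rw [← pow_mul, ← pow_add]
            congr 1
            ring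
          rw [e]
          exact Ideal.mul_mem_right _ _ h
  exact main n hn
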